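/- If B^(0)(X,Y), …, B^(ℓ)(X,Y) is a basis of M_{s,ℓ} as an F_q[X]-module, then G(X)^{s+1}, B^(0)·(Y−R(X)), …, B^(ℓ)·(Y−R(X)) is a basis of M_{s+1,ℓ+1}. -/

import Mathlib

open Polynomial

/-- The shifted polynomial Q(X+a, Y+b), where `Q : F[X][Y]` (outer variable `Y`,
inner variable `X`). -/
noncomputable def shiftXY {F : Type*} [Field F] (Q : Polynomial (Polynomial F)) (a b : F) :
    Polynomial (Polynomial F) :=
  (Q.map ((aeval (X + C a : Polynomial F)).toRingHom : Polynomial F →+* Polynomial F)).comp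
    (X + C (C b))

/-- `Q` vanishes with multiplicity at least `s` at the point `(a, b)`:
`Q(X+a, Y+b)` has no monomial `X^i Y^j` with `i + j < s`. -/
def HasMultAt {F : Type*} [Field F] (Q : Polynomial (Polynomial F)) (a b : F) (s : ℕ) : Prop :=
  ∀ i j : ℕ, i + j < s → ((shiftXY Q a b).coeff j).coeff i = 0

/-- The set (an `F[X]`-module) of bivariate polynomials of `Y`-degree at most `ℓ`
vanishing with multiplicity at least `s` at each point `(α i, r' i)`. -/
def InterpSet {F : Type*} [Field F] {n : ℕ} (α r' : Fin n → F) (s ℓ : ℕ) :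
    Set (Polynomial (Polynomial F)) :=
  {Q | Q.natDegree ≤ ℓ ∧ ∀ i, HasMultAt Q (α i) (r' i) s}

/-- The family `b` is a basis of the `F[X]`-module `M_{s,ℓ} = InterpSet α r' s ℓ`:
it is linearly independent over `F[X]` and its `F[X]`-span is exactly `M_{s,ℓ}`. -/
def IsBasisOfInterp {F : Type*} [Field F] {n : ℕ} (α r' : Fin n → F) (s ℓ : ℕ)
    {ι : Type*} (b : ι → Polynomial (Polynomial F)) : Prop :=
  LinearIndependent (Polynomial F) b ∧
    (Submodule.span (Polynomial F) (Set.range b) : Set (Polynomial (Polynomial F))) =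
      InterpSet α r' s ℓ

section Aux
variable {F : Type*} [Field F]

/-- The shift as a ring homomorphism. -/
noncomputable def shiftHom (a b : F) : Polynomial (Polynomial F) →+* Polynomial (Polynomial F) :=
  (eval₂RingHom (C : Polynomial F →+* Polynomial (Polynomial F)) (X + C (C b))).comp
    (mapRingHom ((aeval (X + C a : Polynomial F)).toRingHom : Polynomial F →+* Polynomial F))

lemma shiftXY_eq (Q : Polynomial (Polynomial F)) (a b : F) :
    shiftXY Q a b = shiftHom a b Q := rfl

/-- All coefficients of `X^i Y^j` with `i+j < s` vanish. -/
def Low (A : Polynomial (Polynomial F)) (s : ℕ) : Prop :=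
  ∀ i j : ℕ, i + j < s → (A.coeff j).coeff i = 0

lemma hasMultAt_iff {Q : Polynomial (Polynomial F)} {a b : F} {s : ℕ} :
    HasMultAt Q a b s ↔ Low (shiftXY Q a b) s := Iff.rfl

lemma low_mul {A B : Polynomial (Polynomial F)} {s t : ℕ}
    (hA : Low A s) (hB : Low B t) : Low (A * B) (s + t) := by
  intro i j hij
  rw [coeff_mul, finset_sum_coeff]
  refine Finset.sum_eq_zero ?_
  rintro ⟨j1, j2⟩ hj
  rw [Finset.HasAntidiagonal.mem_antidiagonal] at hj
  rw [coeff_mul]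
  refine Finset.sum_eq_zero ?_
  rintro ⟨i1, i2⟩ hi
  rw [Finset.HasAntidiagonal.mem_antidiagonal] at hi
  rcases lt_or_ge (i1 + j1) s with h | h
  · rw [hA i1 j1 h, zero_mul]
  · rw [hB i2 j2 (by omega), mul_zero]

lemma hasMultAt_mul {P Q : Polynomial (Polynomial F)} {a b : F} {s t : ℕ}
    (hP : HasMultAt P a b s) (hQ : HasMultAt Q a b t) : HasMultAt (P * Q) a b (s + t) := by
  rw [hasMultAt_iff, shiftXY_eq, map_mul]
  exact low_mul hP hQ

lemma low_C {p : Polynomial F} {s : ℕ} (h : X ^ s ∣ p) : Low (C p : Polynomial (Polynomial F)) s := by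
  intro i j hij
  rw [coeff_C]
  split_ifs with hj
  · subst hj; exact X_pow_dvd_iff.mp h i (by omega)
  · simp

/-- The key cancellation lemma. -/
lemma low_of_mul {A : Polynomial (Polynomial F)} {u : Polynomial F} (hu : u.coeff 0 = 0)
    {s : ℕ} (h : Low (A * (X - C u)) (s + 1)) : Low A s := by
  intro i
  induction i using Nat.strong_induction_on with
  | _ i IH =>
    intro j hij
    have key : A.coeff j = (A * (X - C u)).coeff (j + 1) + A.coeff (j + 1) * u := by
      rw [mul_sub, coeff_sub, coeff_mul_X, coeff_mul_C]; ring
    rw [key, coeff_add, h i (j + 1) (by omega), zero_add, coeff_mul]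
    refine Finset.sum_eq_zero ?_
    rintro ⟨k, m⟩ hkm
    rw [Finset.HasAntidiagonal.mem_antidiagonal] at hkm
    rcases Nat.eq_zero_or_pos m with hm | hm
    · subst hm; rw [hu, mul_zero]
    · rw [IH k (by omega) (j + 1) (by omega), zero_mul]

lemma aeval_eq_comp (p q : Polynomial F) : (aeval q) p = p.comp q := by
  rw [aeval_def, Polynomial.comp, Polynomial.algebraMap_eq]

lemma shiftXY_C (p : Polynomial F) (a b : F) :
    shiftXY (C p) a b = C (p.comp (X + C a)) := by
  rw [shiftXY_eq, shiftHom]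
  simp [aeval_eq_comp]

lemma shiftXY_X_sub_C (R : Polynomial F) (a b : F) :
    shiftXY (X - C R) a b = X - C (R.comp (X + C a) - C b) := by
  rw [shiftXY_eq, map_sub, ← shiftXY_eq, ← shiftXY_eq, shiftXY_C, shiftXY]
  simp only [Polynomial.map_X, X_comp]
  rw [map_sub]
  ring

lemma eval_shiftXY (Q : Polynomial (Polynomial F)) (R : Polynomial F) (a b : F) :
    (shiftXY Q a b).eval (R.comp (X + C a) - C b) = (Q.eval R).comp (X + C a) := by
  have hhom : ((aeval (X + C a : Polynomial F)).toRingHom : Polynomial F →+* Polynomial F).comp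
        (evalRingHom R) =
      (evalRingHom (R.comp (X + C a) - C b)).comp (shiftHom a b) := by
    apply Polynomial.ringHom_ext
    · intro p
      simp only [RingHom.comp_apply, coe_evalRingHom, eval_C, ← shiftXY_eq, shiftXY_C,
        AlgHom.toRingHom_eq_coe, RingHom.coe_coe, aeval_eq_comp]
    · simp only [RingHom.comp_apply, coe_evalRingHom, eval_X, ← shiftXY_eq, shiftXY,
        Polynomial.map_X, X_comp, eval_add, eval_X, eval_C, AlgHom.toRingHom_eq_coe,
        RingHom.coe_coe, aeval_eq_comp]
      ring
  have := congrArg (fun f => f Q) hhom.symm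
  simpa [aeval_eq_comp, ← shiftXY_eq] using this

lemma X_pow_dvd_eval {A : Polynomial (Polynomial F)} {s : ℕ} (hA : Low A s)
    {u : Polynomial F} (hu : X ∣ u) : (X : Polynomial F) ^ s ∣ A.eval u := by
  rw [eval_eq_sum_range]
  refine Finset.dvd_sum ?_
  intro j hj
  rcases le_or_gt s j with h | h
  · exact dvd_mul_of_dvd_right (dvd_trans (pow_dvd_pow X h) (pow_dvd_pow_of_dvd hu j)) _
  · have h1 : (X : Polynomial F) ^ (s - j) ∣ A.coeff j :=
      X_pow_dvd_iff.mpr fun i hi => hA i j (by omega)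
    have h2 : (X : Polynomial F) ^ j ∣ u ^ j := pow_dvd_pow_of_dvd hu j
    have := mul_dvd_mul h1 h2
    rwa [← pow_add, Nat.sub_add_cancel h.le] at this

/-- Vanishing multiplicity `s` at `(a, R a)` gives `(X-a)^s ∣ Q(X, R(X))`. -/
lemma pow_dvd_eval_of_hasMultAt {Q : Polynomial (Polynomial F)} {a b : F} {s : ℕ}
    (h : HasMultAt Q a b s) (R : Polynomial F) (hR : R.eval a = b) :
    (X - C a) ^ s ∣ Q.eval R := by
  have hu : (X : Polynomial F) ∣ R.comp (X + C a) - C b := by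
    rw [X_dvd_iff, coeff_sub, coeff_zero_eq_eval_zero, eval_comp]
    simp [hR]
  have h1 : (X : Polynomial F) ^ s ∣ (shiftXY Q a b).eval (R.comp (X + C a) - C b) :=
    X_pow_dvd_eval h hu
  rw [eval_shiftXY] at h1
  have h2 := map_dvd ((aeval (X - C a : Polynomial F)).toRingHom) h1
  simp only [AlgHom.toRingHom_eq_coe, RingHom.coe_coe, map_pow, aeval_eq_comp] at h2
  rw [X_comp, Polynomial.comp_assoc] at h2
  simpa using h2

lemma hasMultAt_C_of_dvd {p : Polynomial F} {a b : F} {s : ℕ}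
    (h : (X - C a) ^ s ∣ p) : HasMultAt (C p) a b s := by
  rw [hasMultAt_iff, shiftXY_C]
  apply low_C
  have h2 := map_dvd ((aeval (X + C a : Polynomial F)).toRingHom) h
  simp only [AlgHom.toRingHom_eq_coe, RingHom.coe_coe, map_pow, map_sub, aeval_X, aeval_C,
    aeval_eq_comp] at h2
  simpa using h2

lemma hasMultAt_X_sub_C {R : Polynomial F} {a b : F} (hR : R.eval a = b) :
    HasMultAt (X - C R) a b 1 := by
  rw [hasMultAt_iff, shiftXY_X_sub_C]
  intro i j hij
  obtain ⟨rfl, rfl⟩ : i = 0 ∧ j = 0 := by omega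
  rw [coeff_sub, coeff_X_zero, coeff_C, zero_sub, if_pos rfl, coeff_neg, coeff_sub,
    coeff_zero_eq_eval_zero, eval_comp]
  simp [hR]

lemma hasMultAt_sub {P Q : Polynomial (Polynomial F)} {a b : F} {s : ℕ}
    (hP : HasMultAt P a b s) (hQ : HasMultAt Q a b s) : HasMultAt (P - Q) a b s := by
  intro i j h
  rw [shiftXY_eq, map_sub, coeff_sub, coeff_sub, ← shiftXY_eq, ← shiftXY_eq, hP i j h,
    hQ i j h, sub_zero]

/-- `InterpSet` as a submodule. -/
noncomputable def interpSub {n : ℕ} (α r' : Fin n → F) (s ℓ : ℕ) :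
    Submodule (Polynomial F) (Polynomial (Polynomial F)) where
  carrier := {Q | Q.natDegree ≤ ℓ ∧ ∀ i, HasMultAt Q (α i) (r' i) s}
  zero_mem' := by
    refine ⟨by simp, fun i => ?_⟩
    rw [hasMultAt_iff, shiftXY_eq, map_zero]
    intro _ _ _; simp
  add_mem' := by
    rintro P Q ⟨hPd, hPm⟩ ⟨hQd, hQm⟩
    refine ⟨le_trans (natDegree_add_le P Q) (max_le hPd hQd), fun i => ?_⟩
    rw [hasMultAt_iff, shiftXY_eq, map_add]
    intro i' j' h
    rw [coeff_add, coeff_add, ← shiftXY_eq, ← shiftXY_eq, hPm i i' j' h, hQm i i' j' h, add_zero]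
  smul_mem' := by
    intro c Q ⟨hQd, hQm⟩
    rw [smul_eq_C_mul]
    constructor
    · exact le_trans (natDegree_mul_le) (by simpa using hQd)
    · intro i
      have : HasMultAt ((C c : Polynomial (Polynomial F)) * Q) (α i) (r' i) (0 + s) :=
        hasMultAt_mul (fun _ _ h => absurd h (by omega)) (hQm i)
      simpa using this

end Aux

/-- If B^(0), …, B^(ℓ) is a basis of M_{s,ℓ}, then
G^{s+1}, B^(0)(Y−R), …, B^(ℓ)(Y−R) is a basis of M_{s+1,ℓ+1}. -/
theorem statement10 {F : Type*} [Field F] [Fintype F] {n : ℕ}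
    (α : Fin n → F) (hα : Function.Injective α) (r' : Fin n → F)
    (s ℓ : ℕ) (hs : 1 ≤ s) (hsℓ : s ≤ ℓ)
    (R : Polynomial F) (hRdeg : R.natDegree < n) (hR : ∀ i, R.eval (α i) = r' i)
    (B : Fin (ℓ + 1) → Polynomial (Polynomial F))
    (hB : IsBasisOfInterp α r' s ℓ B) :
    IsBasisOfInterp α r' (s + 1) (ℓ + 1)
      (Fin.cons (C ((∏ i, (X - C (α i))) ^ (s + 1)))
        (fun i => B i * (X - C R)) :
        Fin (ℓ + 2) → Polynomial (Polynomial F)) := by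
  classical
  obtain ⟨hBli, hBspan⟩ := hB
  set G : Polynomial F := ∏ i, (X - C (α i)) with hGdef
  have hGmonic : G.Monic := monic_prod_of_monic _ _ fun i _ => monic_X_sub_C _
  have hGne : G ^ (s + 1) ≠ 0 := pow_ne_zero _ hGmonic.ne_zero
  have hXR : (X - C R : Polynomial (Polynomial F)) ≠ 0 := X_sub_C_ne_zero R
  have hdvdG : ∀ i : Fin n, (X - C (α i)) ^ (s + 1) ∣ G ^ (s + 1) :=
    fun i => pow_dvd_pow_of_dvd (Finset.dvd_prod_of_mem _ (Finset.mem_univ i)) _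
  have hBmem : ∀ i, B i ∈ InterpSet α r' s ℓ := fun i => by
    rw [← hBspan]; exact Submodule.subset_span ⟨i, rfl⟩
  set f : Fin (ℓ + 2) → Polynomial (Polynomial F) :=
    (Fin.cons (C (G ^ (s + 1))) (fun i => B i * (X - C R))) with hfdef
  show IsBasisOfInterp α r' (s + 1) (ℓ + 1) f
  -- the mul-by-(X - C R) linear map
  set l : Polynomial (Polynomial F) →ₗ[Polynomial F] Polynomial (Polynomial F) :=
    LinearMap.mulRight (Polynomial F) (X - C R) with hldef
  have hl : ∀ A, l A = A * (X - C R) := fun A => rfl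
  have hspan_tail : Submodule.span (Polynomial F) (Set.range fun i => B i * (X - C R)) =
      Submodule.map l (Submodule.span (Polynomial F) (Set.range B)) := by
    rw [← Submodule.span_image]
    congr 1
    ext Q
    simp [hl, Set.range_comp, Set.mem_image]
  constructor
  · -- linear independence
    rw [Fintype.linearIndependent_iff]
    intro g hg
    rw [Fin.sum_univ_succ] at hg
    simp only [hfdef, Fin.cons_zero, Fin.cons_succ] at hg
    have hg0 : g 0 = 0 := by
      have h1 := congrArg (Polynomial.eval R) hg
      simp only [eval_add, eval_finset_sum, smul_eq_C_mul, eval_mul, eval_C, eval_sub, eval_X,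
        sub_self, mul_zero, eval_zero, Finset.sum_const_zero, add_zero] at h1
      rcases mul_eq_zero.mp h1 with h | h
      · exact h
      · exact absurd h hGne
    rw [hg0, zero_smul, zero_add] at hg
    have hg' : (∑ i, g i.succ • B i) * (X - C R) = 0 := by
      rw [Finset.sum_mul, ← hg]
      exact Finset.sum_congr rfl fun i _ => smul_mul_assoc _ _ _
    have hsum : (∑ i, g i.succ • B i) = 0 := by
      rcases mul_eq_zero.mp hg' with h | h
      · exact h
      · exact absurd h hXR
    have hzero := Fintype.linearIndependent_iff.mp hBli (fun i => g i.succ) hsum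
    intro i
    refine Fin.cases hg0 (fun j => hzero j) i
  · -- span
    have hIS : InterpSet α r' (s + 1) (ℓ + 1) =
        (interpSub α r' (s + 1) (ℓ + 1) : Set (Polynomial (Polynomial F))) := rfl
    apply Set.Subset.antisymm
    · -- span ⊆ InterpSet
      rw [hIS]
      have hrange : Set.range f ⊆ ↑(interpSub α r' (s + 1) (ℓ + 1)) := by
        rw [hfdef, Fin.range_cons]
        rintro P hP
        rcases hP with rfl | ⟨i, rfl⟩
        · exact ⟨by simp, fun i => hasMultAt_C_of_dvd (hdvdG i)⟩
        · obtain ⟨hd, hm⟩ := hBmem i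
          refine ⟨le_trans natDegree_mul_le ?_, fun j => ?_⟩
          · have h1 : (X - C R : Polynomial (Polynomial F)).natDegree = 1 := natDegree_X_sub_C R
            omega
          · exact hasMultAt_mul (hm j) (hasMultAt_X_sub_C (hR j))
      exact fun Q hQ => Submodule.span_le.mpr hrange hQ
    · -- InterpSet ⊆ span
      rintro Q ⟨hQd, hQm⟩
      set Q₁ := Q /ₘ (X - C R) with hQ₁def
      have hmonic : (X - C R : Polynomial (Polynomial F)).Monic := monic_X_sub_C R
      have hkey : C (Q.eval R) + (X - C R) * Q₁ = Q := by
        rw [← modByMonic_X_sub_C_eq_C_eval]; exact modByMonic_add_div Q (X - C R)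
      have hdvd : ∀ i : Fin n, (X - C (α i)) ^ (s + 1) ∣ Q.eval R :=
        fun i => pow_dvd_eval_of_hasMultAt (hQm i) R (hR i)
      have hGdvd : G ^ (s + 1) ∣ Q.eval R := by
        rw [hGdef, ← Finset.prod_pow]
        refine Finset.prod_dvd_of_coprime ?_ (fun i _ => hdvd i)
        have hcp : Pairwise (Function.onFun IsCoprime fun i : Fin n => (X - C (α i)) ^ (s + 1)) :=
          fun i j hij => (pairwise_coprime_X_sub_C hα hij).pow
        exact hcp.set_pairwise _
      obtain ⟨c, hc⟩ := hGdvd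
      have hsub : ∀ i, HasMultAt (Q₁ * (X - C R)) (α i) (r' i) (s + 1) := by
        intro i
        have h3 := hasMultAt_sub (hQm i) (hasMultAt_C_of_dvd (hdvd i) (b := r' i))
        have heq : Q₁ * (X - C R) = Q - C (Q.eval R) := by
          linear_combination hkey
        rwa [← heq] at h3
      have hQ₁mem : Q₁ ∈ InterpSet α r' s ℓ := by
        constructor
        · have h4 := natDegree_divByMonic Q hmonic
          rw [natDegree_X_sub_C] at h4
          rw [← hQ₁def] at h4
          omega
        · intro i
          rw [hasMultAt_iff]
          have hu : (R.comp (X + C (α i)) - C (r' i)).coeff 0 = 0 := by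
            rw [coeff_sub, coeff_zero_eq_eval_zero, eval_comp]
            simp [hR i]
          refine low_of_mul hu ?_
          have h5 := (hasMultAt_iff).mp (hsub i)
          rwa [shiftXY_eq, map_mul, ← shiftXY_eq, ← shiftXY_eq, shiftXY_X_sub_C] at h5
      have hQ₁span : Q₁ ∈ Submodule.span (Polynomial F) (Set.range B) := by
        rw [← hBspan] at hQ₁mem; exact hQ₁mem
      have htail : Q₁ * (X - C R) ∈
          Submodule.span (Polynomial F) (Set.range fun i => B i * (X - C R)) := by
        rw [hspan_tail]
        exact ⟨Q₁, hQ₁span, rfl⟩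
      have hhead : (C (G ^ (s + 1)) : Polynomial (Polynomial F)) ∈
          Submodule.span (Polynomial F) (Set.range f) :=
        Submodule.subset_span ⟨0, by simp [hfdef]⟩
      have htail' : Q₁ * (X - C R) ∈ Submodule.span (Polynomial F) (Set.range f) := by
        refine Submodule.span_mono ?_ htail
        rintro P ⟨i, rfl⟩
        exact ⟨i.succ, by simp [hfdef]⟩
      have hfin : Q = c • (C (G ^ (s + 1)) : Polynomial (Polynomial F)) + Q₁ * (X - C R) := by
        have hc' : (C (Q.eval R) : Polynomial (Polynomial F)) = C c * C (G ^ (s + 1)) := by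
          rw [hc, C_mul]; ring
        rw [smul_eq_C_mul]
        linear_combination hkey.symm + hc'
      show Q ∈ Submodule.span (Polynomial F) (Set.range f)
      rw [hfin]
      exact Submodule.add_mem _ (Submodule.smul_mem _ _ hhead) htail'
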